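/- Let F: H × X^n → ℝ be measurable, β > 0, and 0 = β₀ < β₁ < ⋯ < β_K = β. Define Γ(h,x,β⃗) = -β L̂(h,x) + Σ_{k=1}^K (β_k - β_{k-1}) E_{g∼G_{β_{k-1}}(x)}[L̂(g,x)]. Then for δ > 0, with probability at least 1-δ when x ∼ μⁿ and h ∼ G_β(x): F(h,x) ≤ Γ(h,x,β⃗) + ln E_x E_{g∼π}[e^{F(g,x)}] + ln(1/δ). -/

import Mathlib

open MeasureTheory Real

lemma bdd_integrable {H : Type*} [MeasurableSpace H] (ν : Measure H) [IsFiniteMeasure ν]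
    {L : H → ℝ} (hm : Measurable L) {C : ℝ} (hC : ∀ h, |L h| ≤ C) :
    Integrable L ν :=
  (integrable_const C).mono' hm.aestronglyMeasurable (ae_of_all _ fun h => by
    simpa [Real.norm_eq_abs] using hC h)

lemma fin_telescope : ∀ {K : ℕ} (W : Fin (K+1) → ℝ),
    ∑ k : Fin K, (W k.succ - W k.castSucc) = W (Fin.last K) - W 0 := by
  intro K
  induction K with
  | zero => intro W; simp [Fin.last]
  | succ K ih =>
    intro W
    rw [Fin.sum_univ_castSucc]
    have := ih (fun k => W k.castSucc)
    simp only [Fin.succ_castSucc] at this ⊢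
    rw [this, Fin.succ_last]
    simp

lemma exp_neg_integrable {H : Type*} [MeasurableSpace H] (ν : Measure H) [IsFiniteMeasure ν]
    {L : H → ℝ} (hm : Measurable L) (hL0 : ∀ h, 0 ≤ L h) {c : ℝ} (hc : 0 ≤ c) :
    Integrable (fun h => Real.exp (-c * L h)) ν := by
  refine bdd_integrable ν (by fun_prop) (C := 1) fun h => ?_
  rw [abs_of_nonneg (Real.exp_pos _).le, ← Real.exp_zero]
  exact Real.exp_le_exp.2 (by nlinarith [hL0 h])

lemma step_ineq {H : Type*} [MeasurableSpace H] (pri : Measure H) [IsProbabilityMeasure pri]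
    {L : H → ℝ} (hm : Measurable L) {C : ℝ} (hL0 : ∀ h, 0 ≤ L h) (hLC : ∀ h, L h ≤ C)
    {a b : ℝ} (ha : 0 ≤ a) (hab : a ≤ b) :
    -(b - a) * ∫ h, L h ∂(pri.tilted fun h => -a * L h)
      ≤ Real.log (∫ h, Real.exp (-b * L h) ∂pri)
        - Real.log (∫ h, Real.exp (-a * L h) ∂pri) := by
  have hinta : Integrable (fun h => Real.exp (-a * L h)) pri := exp_neg_integrable pri hm hL0 ha
  have hintb : Integrable (fun h => Real.exp (-b * L h)) pri :=
    exp_neg_integrable pri hm hL0 (ha.trans hab)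
  have hZa : 0 < ∫ h, Real.exp (-a * L h) ∂pri := integral_exp_pos hinta
  have hZb : 0 < ∫ h, Real.exp (-b * L h) ∂pri := integral_exp_pos hintb
  set G := pri.tilted fun h => -a * L h with hG
  haveI : IsProbabilityMeasure G := isProbabilityMeasure_tilted hinta
  have hLint : Integrable L G := bdd_integrable G hm (C := |C| + 1) fun h =>
    abs_le.2 ⟨by linarith [hL0 h, abs_nonneg C], by linarith [hLC h, le_abs_self C]⟩
  have hexpint : Integrable (fun h => Real.exp (-(b - a) * L h)) G :=
    exp_neg_integrable G hm hL0 (by linarith)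
  have jensen : Real.exp (∫ h, -(b - a) * L h ∂G) ≤ ∫ h, Real.exp (-(b - a) * L h) ∂G := by
    have := convexOn_exp.map_integral_le (μ := G) (f := fun h => -(b - a) * L h)
      continuous_exp.continuousOn isClosed_univ
      (ae_of_all _ fun _ => Set.mem_univ _) (hLint.const_mul _) (by exact hexpint)
    exact this
  have key : ∫ h, Real.exp (-(b - a) * L h) ∂G
      = (∫ h, Real.exp (-b * L h) ∂pri) / ∫ h, Real.exp (-a * L h) ∂pri := by
    have h1 := integral_exp_tilted (μ := pri) (fun h => -a * L h) (fun h => -(b - a) * L h)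
    have h2 : (fun h => Real.exp (((fun h => -a * L h) + fun h => -(b - a) * L h) h))
        = fun h => Real.exp (-b * L h) := by
      funext h; simp only [Pi.add_apply]; ring_nf
    rw [h1, h2]
  rw [MeasureTheory.integral_const_mul] at jensen
  rw [key] at jensen
  have := (Real.le_log_iff_exp_le (div_pos hZb hZa)).2 jensen
  rwa [Real.log_div hZb.ne' hZa.ne'] at this
/-- Empirical loss `L̂(h,x) = (1/n) Σ_i ℓ(h,x_i)`. -/
noncomputable def empLoss {H X : Type*} (n : ℕ) (ℓ : H → X → ℝ) (h : H) (x : Fin n → X) : ℝ :=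
  (∑ i, ℓ h (x i)) / n

/-- Partition function `Z_β(x) = ∫ exp(-β L̂(h,x)) dπ(h)`. -/
noncomputable def partZ {H X : Type*} [MeasurableSpace H] (pri : Measure H) (n : ℕ)
    (ℓ : H → X → ℝ) (β : ℝ) (x : Fin n → X) : ℝ :=
  ∫ h, Real.exp (-β * empLoss n ℓ h x) ∂pri

/-- Gibbs posterior `G_β(x)` with density `exp(-β L̂(h,x))/Z_β(x)` w.r.t. the prior. -/
noncomputable def gibbsP {H X : Type*} [MeasurableSpace H] (pri : Measure H) (n : ℕ)
    (ℓ : H → X → ℝ) (β : ℝ) (x : Fin n → X) : Measure H :=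
  pri.withDensity fun h =>
    ENNReal.ofReal (Real.exp (-β * empLoss n ℓ h x) / partZ pri n ℓ β x)

/-- The bounding functional
`Γ(h,x,β⃗) = -β_K L̂(h,x) + Σ_{k=1}^K (β_k-β_{k-1}) E_{g∼G_{β_{k-1}}(x)}[L̂(g,x)]`. -/
noncomputable def Gam {H X : Type*} [MeasurableSpace H] (pri : Measure H) (n : ℕ)
    (ℓ : H → X → ℝ) {K : ℕ} (βs : Fin (K + 1) → ℝ) (h : H) (x : Fin n → X) : ℝ :=
  -βs (Fin.last K) * empLoss n ℓ h x
    + ∑ k : Fin K, (βs k.succ - βs k.castSucc)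
        * ∫ g, empLoss n ℓ g x ∂(gibbsP pri n ℓ (βs k.castSucc) x)

/-- with probability at least `1-δ` when `x ∼ μⁿ` and `h ∼ G_β(x)`,
`F(h,x) ≤ Γ(h,x,β⃗) + ln E_x E_{g∼π}[e^{F(g,x)}] + ln(1/δ)`. -/
theorem main_bound_single_draw {H X : Type*} [MeasurableSpace H] [MeasurableSpace X]
    (μ : Measure X) [IsProbabilityMeasure μ]
    (pri : Measure H) [IsProbabilityMeasure pri]
    (n : ℕ) (hn : 0 < n)
    (ℓ : H → X → ℝ) (hℓmeas : Measurable fun p : H × X => ℓ p.1 p.2)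
    (m : ℝ) (hℓnonneg : ∀ h x, 0 ≤ ℓ h x) (hℓbound : ∀ h x, ℓ h x ≤ m)
    (K : ℕ) (hK : 0 < K) (βs : Fin (K + 1) → ℝ)
    (hmono : StrictMono βs) (h0 : βs 0 = 0)
    (β : ℝ) (hβ : βs (Fin.last K) = β) (hβpos : 0 < β)
    (F : H → (Fin n → X) → ℝ)
    (hFmeas : Measurable fun p : H × (Fin n → X) => F p.1 p.2)
    (hFint : Integrable (fun p : H × (Fin n → X) => Real.exp (F p.1 p.2))
      (pri.prod (Measure.pi fun _ : Fin n => μ)))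
    (δ : ℝ) (hδ : 0 < δ) :
    ∫⁻ x, (gibbsP pri n ℓ β x)
        {h | Gam pri n ℓ βs h x
              + Real.log (∫ x', ∫ g, Real.exp (F g x') ∂pri
                  ∂(Measure.pi fun _ : Fin n => μ))
              + Real.log (1 / δ) < F h x}
      ∂(Measure.pi fun _ : Fin n => μ) ≤ ENNReal.ofReal δ := by

  set μn := Measure.pi fun _ : Fin n => μ with hμn
  haveI : IsProbabilityMeasure μn := by rw [hμn]; infer_instance
  -- basic facts about the empirical loss
  have hmL : ∀ x : Fin n → X, Measurable fun h => empLoss n ℓ h x := by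
    intro x
    unfold empLoss
    exact (Finset.measurable_sum _ fun i _ =>
      hℓmeas.comp (measurable_prodMk_right (y := x i))).div_const _
  have hL0 : ∀ (h : H) (x : Fin n → X), 0 ≤ empLoss n ℓ h x := fun h x =>
    div_nonneg (Finset.sum_nonneg fun i _ => hℓnonneg h (x i)) (Nat.cast_nonneg n)
  have hLm : ∀ (h : H) (x : Fin n → X), empLoss n ℓ h x ≤ m := by
    intro h x
    have hn' : (0:ℝ) < n := by exact_mod_cast hn
    rw [empLoss, div_le_iff₀ hn']
    calc ∑ i, ℓ h (x i) ≤ ∑ _i : Fin n, m := Finset.sum_le_sum fun i _ => hℓbound h (x i)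
      _ = m * n := by simp [mul_comm]
  have hβnn : ∀ j : Fin (K + 1), 0 ≤ βs j := by
    intro j
    rw [← h0]
    exact hmono.monotone (Fin.zero_le j)
  -- gibbsP is a tilted measure
  have hgt : ∀ (c : ℝ) (x : Fin n → X),
      gibbsP pri n ℓ c x = pri.tilted fun h => -c * empLoss n ℓ h x := fun c x => rfl
  have hZdef : ∀ (c : ℝ) (x : Fin n → X),
      partZ pri n ℓ c x = ∫ h, Real.exp (-c * empLoss n ℓ h x) ∂pri := fun c x => rfl
  have hZpos : ∀ (c : ℝ) (x : Fin n → X), 0 ≤ c → 0 < partZ pri n ℓ c x := by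
    intro c x hc
    rw [hZdef]
    exact integral_exp_pos (exp_neg_integrable pri (hmL x) (fun h => hL0 h x) hc)
  -- log-density is bounded by Gam
  have hGam : ∀ (x : Fin n → X) (h : H),
      -β * empLoss n ℓ h x - Real.log (partZ pri n ℓ β x) ≤ Gam pri n ℓ βs h x := by
    intro x h
    set W : Fin (K + 1) → ℝ := fun j => Real.log (partZ pri n ℓ (βs j) x) with hW
    have hstep : ∀ k : Fin K,
        -(βs k.succ - βs k.castSucc)
            * ∫ g, empLoss n ℓ g x ∂(gibbsP pri n ℓ (βs k.castSucc) x)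
          ≤ W k.succ - W k.castSucc := by
      intro k
      exact step_ineq pri (hmL x) (fun h => hL0 h x) (fun h => hLm h x)
        (hβnn k.castSucc) (hmono (Fin.castSucc_lt_succ : k.castSucc < k.succ)).le
    have hsum := Finset.sum_le_sum fun k (_ : k ∈ Finset.univ) => hstep k
    rw [fin_telescope W] at hsum
    have hW0 : W 0 = 0 := by
      have : partZ pri n ℓ (βs 0) x = 1 := by
        rw [h0, hZdef]
        simp
      rw [hW]
      simp [this]
    have hWlast : W (Fin.last K) = Real.log (partZ pri n ℓ β x) := by simp only [hW, hβ]
    rw [hW0, hWlast, sub_zero] at hsum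
    have hneg : ∑ k : Fin K, -(βs k.succ - βs k.castSucc)
          * ∫ g, empLoss n ℓ g x ∂(gibbsP pri n ℓ (βs k.castSucc) x)
        = -∑ k : Fin K, (βs k.succ - βs k.castSucc)
          * ∫ g, empLoss n ℓ g x ∂(gibbsP pri n ℓ (βs k.castSucc) x) := by
      simp only [neg_mul]
      exact Finset.sum_neg_distrib _
    rw [hneg] at hsum
    unfold Gam
    rw [hβ]
    linarith
  -- the normalizing constant M
  set M := ∫ x', ∫ g, Real.exp (F g x') ∂pri ∂μn with hM
  have hMprod : ∫ p : H × (Fin n → X), Real.exp (F p.1 p.2) ∂(pri.prod μn) = M := by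
    rw [MeasureTheory.integral_prod _ hFint, hM]
    exact integral_integral_swap hFint
  have hMpos : 0 < M := by
    rw [← hMprod]
    exact integral_exp_pos hFint
  -- pointwise (in x) bound on the Gibbs mass of the bad event
  have hxbound : ∀ x : Fin n → X,
      (gibbsP pri n ℓ β x)
          {h | Gam pri n ℓ βs h x + Real.log M + Real.log (1 / δ) < F h x}
        ≤ ENNReal.ofReal (δ / M) * ∫⁻ h, ENNReal.ofReal (Real.exp (F h x)) ∂pri := by
    intro x
    have hZx : 0 < partZ pri n ℓ β x := hZpos β x hβpos.le
    have hFx : Measurable fun h => F h x := hFmeas.comp (measurable_prodMk_right (y := x))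
    have hGmeas : Measurable fun h => Gam pri n ℓ βs h x + Real.log M + Real.log (1 / δ) := by
      unfold Gam
      exact ((((hmL x).const_mul _).add_const _).add_const _).add_const _
    have hA : MeasurableSet {h | Gam pri n ℓ βs h x + Real.log M + Real.log (1 / δ) < F h x} :=
      measurableSet_lt hGmeas hFx
    rw [hgt β x, tilted_apply' _ _ hA]
    calc ∫⁻ h in {h | Gam pri n ℓ βs h x + Real.log M + Real.log (1 / δ) < F h x},
            ENNReal.ofReal (Real.exp (-β * empLoss n ℓ h x)
              / ∫ h', Real.exp (-β * empLoss n ℓ h' x) ∂pri) ∂pri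
        ≤ ∫⁻ h in {h | Gam pri n ℓ βs h x + Real.log M + Real.log (1 / δ) < F h x},
            ENNReal.ofReal (δ / M * Real.exp (F h x)) ∂pri := by
          refine setLIntegral_mono ((hFx.exp.const_mul _).ennreal_ofReal)
            fun h hh => ?_
          refine ENNReal.ofReal_le_ofReal ?_
          have h1 := hGam x h
          have h2 : Gam pri n ℓ βs h x + Real.log M + Real.log (1 / δ) < F h x := hh
          have h3 : -β * empLoss n ℓ h x - Real.log (partZ pri n ℓ β x)
              ≤ F h x - Real.log M + Real.log δ := by
            rw [one_div, Real.log_inv] at h2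
            linarith
          have h4 : Real.exp (-β * empLoss n ℓ h x)
                / ∫ h', Real.exp (-β * empLoss n ℓ h' x) ∂pri
              = Real.exp (-β * empLoss n ℓ h x - Real.log (partZ pri n ℓ β x)) := by
            rw [Real.exp_sub, Real.exp_log hZx, hZdef]
          rw [h4]
          calc Real.exp (-β * empLoss n ℓ h x - Real.log (partZ pri n ℓ β x))
              ≤ Real.exp (F h x - Real.log M + Real.log δ) := Real.exp_le_exp.2 h3
            _ = δ / M * Real.exp (F h x) := by
                rw [show F h x - Real.log M + Real.log δ
                    = F h x + (Real.log δ - Real.log M) by ring,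
                  Real.exp_add, Real.exp_sub, Real.exp_log hδ, Real.exp_log hMpos]
                ring
      _ ≤ ∫⁻ h, ENNReal.ofReal (δ / M * Real.exp (F h x)) ∂pri :=
          setLIntegral_le_lintegral _ _
      _ = ENNReal.ofReal (δ / M) * ∫⁻ h, ENNReal.ofReal (Real.exp (F h x)) ∂pri := by
          simp_rw [ENNReal.ofReal_mul (div_nonneg hδ.le hMpos.le)]
          rw [lintegral_const_mul _ hFx.exp.ennreal_ofReal]
  -- put everything together
  have hFm' : Measurable fun p : H × (Fin n → X) => ENNReal.ofReal (Real.exp (F p.1 p.2)) :=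
    hFmeas.exp.ennreal_ofReal
  calc ∫⁻ x, (gibbsP pri n ℓ β x)
          {h | Gam pri n ℓ βs h x + Real.log M + Real.log (1 / δ) < F h x} ∂μn
      ≤ ∫⁻ x, ENNReal.ofReal (δ / M)
          * ∫⁻ h, ENNReal.ofReal (Real.exp (F h x)) ∂pri ∂μn := lintegral_mono hxbound
    _ = ENNReal.ofReal (δ / M)
        * ∫⁻ x, ∫⁻ h, ENNReal.ofReal (Real.exp (F h x)) ∂pri ∂μn :=
        lintegral_const_mul _ hFm'.lintegral_prod_left'
    _ = ENNReal.ofReal (δ / M)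
        * ∫⁻ p : H × (Fin n → X), ENNReal.ofReal (Real.exp (F p.1 p.2)) ∂(pri.prod μn) := by
        rw [MeasureTheory.lintegral_prod_symm _ hFm'.aemeasurable]
    _ = ENNReal.ofReal (δ / M) * ENNReal.ofReal M := by
        rw [← ofReal_integral_eq_lintegral_ofReal hFint
          (ae_of_all _ fun p => (Real.exp_pos _).le), hMprod]
    _ = ENNReal.ofReal δ := by
        rw [← ENNReal.ofReal_mul (div_nonneg hδ.le hMpos.le), div_mul_cancel₀ δ hMpos.ne']
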